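/- arXiv:1310.8422 — 5 statements merged into one kernel-verified Lean document; each statement's English description precedes it below -/
import Mathlib

section
/- Let (X,T,μ) be an ergodic measure-preserving dynamical system on a probability space, let Y ⊆ X have positive measure, let τ be the first return time to Y and T̂ = T^τ the first return map preserving the normalized measure μ_Y. If for every nonzero f ∈ L²(μ_Y) and t ∈ [0,2π), the relation f∘T̂ = e^{itτ} f implies t = 0 and f is constant (aperiodicity of the return time), then (X,T,μ) is weakly mixing, i.e. any g ∈ L²(μ) with g∘T = e^{it}g for some t ∈ [0,2π) forces t = 0 and g constant. -/
open MeasureTheory Filter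
open scoped ENNReal Topology

/-- Aperiodicity of the first return time implies weak mixing. -/
theorem stmt0 {X : Type*} [MeasurableSpace X] (μ : Measure X) [IsProbabilityMeasure μ]
    (T : X → X) (hT : MeasurePreserving T μ μ) (hErg : Ergodic T μ)
    (Y : Set X) (hY : MeasurableSet Y) (hYpos : 0 < μ Y)
    (τ : X → ℕ) (hτ : ∀ y ∈ Y, τ y = sInf {n : ℕ | 1 ≤ n ∧ T^[n] y ∈ Y})
    (μY : Measure X) (hμY : μY = (μ Y)⁻¹ • μ.restrict Y)
    (haper : ∀ (f : X → ℂ) (t : ℝ), 0 ≤ t → t < 2 * Real.pi →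
      MemLp f 2 μY → ¬ f =ᵐ[μY] 0 →
      (∀ᵐ y ∂μY, f (T^[τ y] y) = Complex.exp ((t : ℂ) * (τ y : ℂ) * Complex.I) * f y) →
      t = 0 ∧ ∃ c : ℂ, f =ᵐ[μY] fun _ => c) :
    ∀ (g : X → ℂ) (t : ℝ), 0 ≤ t → t < 2 * Real.pi →
      MemLp g 2 μ → ¬ g =ᵐ[μ] 0 →
      (∀ᵐ x ∂μ, g (T x) = Complex.exp ((t : ℂ) * Complex.I) * g x) →
      t = 0 ∧ ∃ c : ℂ, g =ᵐ[μ] fun _ => c := by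
  intro g t ht0 ht2 hg hg0 heig
  -- transfer of a.e. statements from μ to μY
  have hμY_ae : ∀ {p : X → Prop}, (∀ᵐ x ∂μ, p x) → (∀ᵐ x ∂μY, p x) := by
    intro p hp
    rw [hμY]
    exact Measure.ae_smul_measure (ae_restrict_of_ae hp) _
  -- iterate the eigenvalue equation
  have key : ∀ n : ℕ, ∀ᵐ x ∂μ, g (T^[n] x) = Complex.exp ((t : ℂ) * Complex.I) ^ n * g x := by
    intro n
    induction n with
    | zero => simp
    | succ n ih =>
      have h2 : ∀ᵐ x ∂μ, g (T^[n] (T x)) = Complex.exp ((t : ℂ) * Complex.I) ^ n * g (T x) :=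
        hT.quasiMeasurePreserving.ae ih
      filter_upwards [heig, h2] with x hx h2x
      rw [Function.iterate_succ_apply, h2x, hx, pow_succ]
      ring
  have key' : ∀ᵐ x ∂μ, ∀ n : ℕ, g (T^[n] x) =
      Complex.exp ((t : ℂ) * (n : ℂ) * Complex.I) * g x := by
    rw [ae_all_iff]
    intro n
    filter_upwards [key n] with x hx
    rw [hx, show (t : ℂ) * (n : ℂ) * Complex.I = (n : ℂ) * ((t : ℂ) * Complex.I) by ring,
      Complex.exp_nat_mul]
  -- the modulus of g is a nonzero constant a.e.
  have habs : (fun x => ‖g x‖) ∘ T =ᵐ[μ] fun x => ‖g x‖ := by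
    filter_upwards [heig] with x hx
    simp only [Function.comp_apply, hx, norm_mul,
      Complex.norm_exp_ofReal_mul_I, one_mul]
  obtain ⟨c, hc⟩ := hErg.ae_eq_const_of_ae_eq_comp_ae hg.aestronglyMeasurable.norm habs
  have hc0 : c ≠ 0 := by
    intro h
    apply hg0
    filter_upwards [hc] with x hx
    simpa [h] using hx
  -- μY is not the zero measure
  have hμYunivpos : 0 < μY Set.univ := by
    rw [hμY]
    simp only [Measure.smul_apply, Measure.restrict_apply MeasurableSet.univ,
      Set.univ_inter, smul_eq_mul]
    exact ENNReal.mul_pos (by simp [hYpos.ne']) hYpos.ne'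
  have hμYne : μY ≠ 0 := by
    intro h; rw [h] at hμYunivpos; simp at hμYunivpos
  haveI : NeZero μY := ⟨hμYne⟩
  -- apply aperiodicity to g on Y
  have hmem : MemLp g 2 μY := by
    rw [hμY]
    exact (hg.restrict Y).smul_measure (ENNReal.inv_ne_top.2 hYpos.ne')
  have hne : ¬ g =ᵐ[μY] 0 := by
    intro hz
    have hcY : ∀ᵐ x ∂μY, ‖g x‖ = c := hμY_ae hc
    have : ∀ᵐ x ∂μY, False := by
      filter_upwards [hz, hcY] with x hx hcx
      apply hc0
      rw [← hcx, hx]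
      simp
    obtain ⟨x, hx⟩ := this.exists
    exact hx
  have heigY : ∀ᵐ y ∂μY, g (T^[τ y] y) =
      Complex.exp ((t : ℂ) * (τ y : ℂ) * Complex.I) * g y := by
    filter_upwards [hμY_ae key'] with y hy using hy (τ y)
  obtain ⟨ht, -⟩ := haper g t ht0 ht2 hmem hne heigY
  subst ht
  refine ⟨rfl, ?_⟩
  have hinv : g ∘ T =ᵐ[μ] g := by
    filter_upwards [heig] with x hx
    simpa using hx
  obtain ⟨c', hc'⟩ := hErg.ae_eq_const_of_ae_eq_comp_ae hg.aestronglyMeasurable hinv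
  exact ⟨c', hc'⟩
end

section
/- Let (X,T,μ) be an ergodic weakly mixing measure-preserving system on a probability space, Y ⊆ X of positive measure, τ the first return time to Y and T̂ = T^τ the induced map on Y with invariant measure μ_Y. If f ∈ L²(μ_Y) is non-zero and satisfies f∘T̂ = e^{itτ} f for some t ∈ [0,2π), then t = 0 and f is constant. -/
open MeasureTheory Filter
open scoped ENNReal Topology


lemma hit_meas {X : Type*} [MeasurableSpace X] {T : X → X} (hT : Measurable T)
    {Y : Set X} (hY : MeasurableSet Y) :
    Measurable (fun x => sInf {n : ℕ | T^[n] x ∈ Y}) := by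
  have hiter : ∀ n : ℕ, MeasurableSet (T^[n] ⁻¹' Y) := fun n => (hT.iterate n) hY
  apply measurable_to_countable'
  intro k
  match k with
  | 0 =>
    have he : (fun x => sInf {n : ℕ | T^[n] x ∈ Y}) ⁻¹' {0}
        = Y ∪ ⋂ n, (T^[n] ⁻¹' Y)ᶜ := by
      ext x
      simp only [Set.mem_preimage, Set.mem_singleton_iff, Nat.sInf_eq_zero, Set.mem_union,
        Set.mem_iInter, Set.mem_compl_iff, Set.mem_setOf_eq]
      constructor
      · rintro (h0 | hemp)
        · left; simpa using h0
        · right; intro n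
          rw [Set.eq_empty_iff_forall_notMem] at hemp
          exact hemp n
      · rintro (hy | hall)
        · left; simpa using hy
        · right; rw [Set.eq_empty_iff_forall_notMem]; exact hall
    rw [he]
    exact hY.union (MeasurableSet.iInter fun n => (hiter n).compl)
  | (k+1) =>
    have he : (fun x => sInf {n : ℕ | T^[n] x ∈ Y}) ⁻¹' {k+1}
        = (T^[k+1] ⁻¹' Y) ∩ ⋂ j ∈ Finset.range (k+1), (T^[j] ⁻¹' Y)ᶜ := by
      ext x
      simp only [Set.mem_preimage, Set.mem_singleton_iff, Set.mem_inter_iff, Set.mem_iInter,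
        Set.mem_compl_iff, Finset.mem_range]
      constructor
      · intro hk
        have hne : {n : ℕ | T^[n] x ∈ Y}.Nonempty := by
          by_contra hne
          rw [Set.not_nonempty_iff_eq_empty] at hne
          rw [hne, Nat.sInf_empty] at hk
          exact Nat.succ_ne_zero k hk.symm
        have hmem := Nat.sInf_mem hne
        rw [hk] at hmem
        refine ⟨hmem, fun j hj hjY => ?_⟩
        exact Nat.notMem_of_lt_sInf (by rw [hk]; exact hj) hjY
      · rintro ⟨hmem, hlt⟩
        refine le_antisymm (Nat.sInf_le hmem) ?_
        refine le_csInf ⟨_, hmem⟩ fun m hm => ?_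
        by_contra hmk
        exact hlt m (by omega) hm
    rw [he]
    exact (hiter (k+1)).inter
      (MeasurableSet.biInter (Set.to_countable _) fun j _ => (hiter j).compl)

/-- Weak mixing implies aperiodicity of the first return time. -/
theorem stmt1 {X : Type*} [MeasurableSpace X] (μ : Measure X) [IsProbabilityMeasure μ]
    (T : X → X) (hT : MeasurePreserving T μ μ) (hErg : Ergodic T μ)
    (hwm : ∀ (g : X → ℂ) (t : ℝ), 0 ≤ t → t < 2 * Real.pi →
      MemLp g 2 μ → ¬ g =ᵐ[μ] 0 →
      (∀ᵐ x ∂μ, g (T x) = Complex.exp ((t : ℂ) * Complex.I) * g x) →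
      t = 0 ∧ ∃ c : ℂ, g =ᵐ[μ] fun _ => c)
    (Y : Set X) (hY : MeasurableSet Y) (hYpos : 0 < μ Y)
    (τ : X → ℕ) (hτ : ∀ y ∈ Y, τ y = sInf {n : ℕ | 1 ≤ n ∧ T^[n] y ∈ Y})
    (μY : Measure X) (hμY : μY = (μ Y)⁻¹ • μ.restrict Y) :
    ∀ (f : X → ℂ) (t : ℝ), 0 ≤ t → t < 2 * Real.pi →
      MemLp f 2 μY → ¬ f =ᵐ[μY] 0 →
      (∀ᵐ y ∂μY, f (T^[τ y] y) = Complex.exp ((t : ℂ) * (τ y : ℂ) * Complex.I) * f y) →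
      t = 0 ∧ ∃ c : ℂ, f =ᵐ[μY] fun _ => c := by
  intro f t ht0 ht2 hf hfne hfeig
  -- basic notation
  set h : X → ℕ := fun x => sInf {n : ℕ | T^[n] x ∈ Y} with hh
  set W : Set X := ⋃ n, T^[n] ⁻¹' Y with hWdef
  have hTm : Measurable T := hT.measurable
  have hWmeas : MeasurableSet W := MeasurableSet.iUnion fun n => (hTm.iterate n) hY
  have hc0 : (μ Y)⁻¹ ≠ 0 := ENNReal.inv_ne_zero.mpr (measure_ne_top μ Y)
  -- transferring a.e. between μY and μ.restrict Y
  have haeY : ∀ (p : X → Prop), (∀ᵐ y ∂μY, p y) ↔ (∀ᵐ y ∂μ.restrict Y, p y) := by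
    intro p; rw [hμY]; simp only [ae_iff, Measure.smul_apply, smul_eq_mul, mul_eq_zero, hc0, false_or]
  -- measurable representative of f
  set f₀ : X → ℂ := hf.1.mk f with hf₀def
  have hf₀m : Measurable f₀ := hf.1.stronglyMeasurable_mk.measurable
  have hff₀ : f =ᵐ[μ.restrict Y] f₀ := (haeY _).mp hf.1.ae_eq_mk
  -- basic facts about the hitting time
  have hmemW : ∀ x : X, x ∈ W ↔ ∃ n, T^[n] x ∈ Y := by
    intro x; simp [hWdef]
  have fact1 : ∀ x ∈ W, T^[h x] x ∈ Y := by
    intro x hx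
    exact Nat.sInf_mem (by rcases (hmemW x).mp hx with ⟨n, hn⟩; exact ⟨n, hn⟩)
  have fact2 : ∀ x ∈ Y, h x = 0 := by
    intro x hx
    exact Nat.sInf_eq_zero.mpr (Or.inl (by simpa using hx))
  have hTW : ∀ x, T x ∈ W → x ∈ W := by
    intro x hx
    rcases (hmemW _).mp hx with ⟨n, hn⟩
    exact (hmemW x).mpr ⟨n + 1, by rwa [Function.iterate_succ_apply]⟩
  -- full measure of W
  have hWfull : ∀ᵐ x ∂μ, x ∈ W := by
    have hpre : T ⁻¹' W ⊆ W := by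
      intro x hx
      rcases Set.mem_iUnion.mp hx with ⟨n, hn⟩
      refine Set.mem_iUnion.mpr ⟨n + 1, ?_⟩
      simp only [Set.mem_preimage] at hn ⊢
      rw [Function.iterate_succ_apply]
      exact hn
    rcases hErg.ae_empty_or_univ_of_preimage_ae_le' hWmeas.nullMeasurableSet
        (HasSubset.Subset.eventuallyLE hpre) (measure_ne_top μ W) with hW0 | hW1
    · exfalso
      have hYW : Y ⊆ W := fun x hx => Set.mem_iUnion.mpr ⟨0, by simpa using hx⟩
      have hW0' : μ W = 0 := ae_eq_empty.mp hW0
      have := lt_of_lt_of_le hYpos (measure_mono hYW)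
      simp [hW0'] at this
    · exact mem_ae_iff.mpr (ae_eq_univ.mp hW1)
  have hTWfull : ∀ᵐ x ∂μ, T x ∈ W := by
    have hnull : μ (T ⁻¹' Wᶜ) = 0 := by
      rw [hT.measure_preimage hWmeas.compl.nullMeasurableSet]
      rw [ae_iff] at hWfull
      exact hWfull
    rw [ae_iff]
    exact hnull
  -- choose a truncation level M
  obtain ⟨M, hM⟩ : ∃ M : ℕ, 0 < (μ.restrict Y) {x | f₀ x ≠ 0 ∧ ‖f₀ x‖ ≤ (M : ℝ)} := by
    by_contra hcon
    push_neg at hcon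
    simp only [le_zero_iff] at hcon
    have hnull : (μ.restrict Y) {x | f₀ x ≠ 0} = 0 := by
      have hsub : {x | f₀ x ≠ 0} ⊆ ⋃ M : ℕ, {x | f₀ x ≠ 0 ∧ ‖f₀ x‖ ≤ (M : ℝ)} := by
        intro x hx
        obtain ⟨M, hMx⟩ := exists_nat_ge ‖f₀ x‖
        exact Set.mem_iUnion.mpr ⟨M, hx, hMx⟩
      exact measure_mono_null hsub (measure_iUnion_null hcon)
    apply hfne
    refine (haeY fun x => f x = 0).mpr ?_
    filter_upwards [hff₀, (ae_iff.mpr hnull : ∀ᵐ x ∂μ.restrict Y, f₀ x = 0)] with x h1 h2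
    rw [h1, h2]
  set f' : X → ℂ := fun y => if ‖f₀ y‖ ≤ (M : ℝ) then f₀ y else 0 with hf'def
  have hf'm : Measurable f' := by
    exact Measurable.ite (measurableSet_le hf₀m.norm measurable_const) hf₀m measurable_const
  have hf'bd : ∀ x, ‖f' x‖ ≤ (M : ℝ) := by
    intro x
    by_cases hx : ‖f₀ x‖ ≤ (M : ℝ)
    · rw [hf'def]; simp only [if_pos hx]; exact hx
    · rw [hf'def]; simp only [if_neg hx, norm_zero]; positivity
  have fact4 : ∀ x, x ∈ Y → T x ∈ W → τ x = h (T x) + 1 := by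
    intro x hxY hTxW
    have h1 : T^[h (T x)] (T x) ∈ Y := fact1 _ hTxW
    have h1' : T^[h (T x) + 1] x ∈ Y := by rwa [Function.iterate_succ_apply]
    rw [hτ x hxY]
    apply le_antisymm
    · exact Nat.sInf_le ⟨Nat.succ_le_succ (Nat.zero_le _), h1'⟩
    · refine le_csInf ⟨_, Nat.succ_le_succ (Nat.zero_le _), h1'⟩ ?_
      rintro m ⟨hm1, hmY⟩
      obtain ⟨j, rfl⟩ : ∃ j, m = j + 1 := ⟨m - 1, by omega⟩
      rw [Function.iterate_succ_apply] at hmY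
      have : h (T x) ≤ j := Nat.sInf_le hmY
      omega
  have hexp1 : ∀ (s : ℝ) (n : ℕ), ‖Complex.exp ((s : ℂ) * (n : ℂ) * Complex.I)‖ = 1 := by
    intro s n
    rw [show (s : ℂ) * (n : ℂ) * Complex.I = ((s * (n : ℝ) : ℝ) : ℂ) * Complex.I by
      push_cast; ring]
    rw [Complex.norm_exp]
    simp
  -- the eigenvalue equation for f', a.e. on Y
  have heig' : ∀ᵐ x ∂μ, x ∈ Y →
      (f' (T^[τ x] x) = Complex.exp ((t : ℂ) * (τ x : ℂ) * Complex.I) * f' x) := by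
    have E1 : ∀ᵐ y ∂μ.restrict Y,
        f (T^[τ y] y) = Complex.exp ((t : ℂ) * (τ y : ℂ) * Complex.I) * f y := (haeY _).mp hfeig
    set B : Set X := toMeasurable μ ({x | f x ≠ f₀ x} ∩ Y) with hBdef
    have hBnull : μ B = 0 := by
      rw [hBdef, measure_toMeasurable]
      have h2 : (μ.restrict Y) {x | f x ≠ f₀ x} = 0 := ae_iff.mp hff₀
      rwa [Measure.restrict_apply' hY] at h2
    have hBk : ∀ᵐ x ∂μ, ∀ k : ℕ, T^[k] x ∉ B := by
      rw [ae_all_iff]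
      intro k
      have hk0 : μ (T^[k] ⁻¹' B) = 0 := by
        rw [(hT.iterate k).measure_preimage (measurableSet_toMeasurable μ _).nullMeasurableSet]
        exact hBnull
      rw [ae_iff]
      simp only [not_not]; exact hk0
    rw [← ae_restrict_iff'₀ hY.nullMeasurableSet]
    filter_upwards [E1, hff₀, ae_restrict_of_ae hBk, ae_restrict_of_ae hTWfull,
      ae_restrict_mem hY] with y h1 h2 h3 h4 h5
    have hm : τ y = h (T y) + 1 := fact4 y h5 h4
    have hτy : T^[τ y] y ∈ Y := by
      rw [hm, Function.iterate_succ_apply]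
      exact fact1 _ h4
    have hval : f (T^[τ y] y) = f₀ (T^[τ y] y) := by
      by_contra hne'
      exact h3 (τ y) (subset_toMeasurable μ _ ⟨hne', hτy⟩)
    have heq0 : f₀ (T^[τ y] y) = Complex.exp ((t : ℂ) * (τ y : ℂ) * Complex.I) * f₀ y := by
      rw [← hval, h1, h2]
    have habs : ‖f₀ (T^[τ y] y)‖ = ‖f₀ y‖ := by
      rw [heq0, norm_mul, hexp1 t (τ y), one_mul]
    rw [hf'def]
    simp only []
    by_cases hcase : ‖f₀ y‖ ≤ (M : ℝ)
    · rw [if_pos hcase, if_pos (by rw [habs]; exact hcase), heq0]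
    · rw [if_neg hcase, if_neg (by rw [habs]; exact hcase), mul_zero]
  -- the lifted eigenfunction
  set g : X → ℂ :=
    W.indicator (fun x => Complex.exp (-(t : ℂ) * (h x : ℂ) * Complex.I) * f' (T^[h x] x))
    with hgdef
  have hgY : ∀ x ∈ Y, g x = f' x := by
    intro x hx
    have hxW : x ∈ W := (hmemW x).mpr ⟨0, by simpa using hx⟩
    rw [hgdef, Set.indicator_of_mem hxW, fact2 x hx]
    simp
  have hhm : Measurable h := hit_meas hTm hY
  have hTh : Measurable fun x => T^[h x] x := by
    have hpair : Measurable fun p : X × ℕ => T^[p.2] p.1 :=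
      measurable_from_prod_countable_left fun n => hTm.iterate n
    exact hpair.comp (measurable_id.prodMk hhm)
  have hgm : Measurable g := by
    apply Measurable.indicator _ hWmeas
    apply Measurable.mul
    · apply Complex.measurable_exp.comp
      apply Measurable.mul _ measurable_const
      exact measurable_const.mul ((measurable_from_top (β := ℂ)).comp hhm)
    · exact hf'm.comp hTh
  have hgbd : ∀ x, ‖g x‖ ≤ (M : ℝ) := by
    intro x
    by_cases hx : x ∈ W
    · rw [hgdef, Set.indicator_of_mem hx, norm_mul]
      have : ‖Complex.exp (-(t : ℂ) * ((h x : ℕ) : ℂ) * Complex.I)‖ = 1 := by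
        rw [show -(t : ℂ) * ((h x : ℕ) : ℂ) * Complex.I
            = ((-t : ℝ) : ℂ) * ((h x : ℕ) : ℂ) * Complex.I by push_cast; ring]
        exact hexp1 (-t) (h x)
      rw [this, one_mul]
      exact hf'bd _
    · rw [hgdef, Set.indicator_of_notMem hx, norm_zero]
      positivity
  have hgL2 : MemLp g 2 μ :=
    MemLp.of_bound hgm.aestronglyMeasurable (M : ℝ) (Filter.Eventually.of_forall hgbd)
  have hgne : ¬ g =ᵐ[μ] 0 := by
    intro hg0
    have hsub : {x | f₀ x ≠ 0 ∧ ‖f₀ x‖ ≤ (M : ℝ)} ∩ Y ⊆ {x | g x ≠ 0} := by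
      rintro x ⟨⟨hne0, hle⟩, hxY⟩
      have : g x = f' x := hgY x hxY
      rw [Set.mem_setOf_eq, this, hf'def]
      simp only [if_pos hle]
      exact hne0
    have hz : μ ({x | f₀ x ≠ 0 ∧ ‖f₀ x‖ ≤ (M : ℝ)} ∩ Y) = 0 :=
      measure_mono_null hsub (ae_iff.mp hg0)
    rw [Measure.restrict_apply' hY, hz] at hM
    exact lt_irrefl _ hM
  have hgeig : ∀ᵐ x ∂μ, g (T x) = Complex.exp ((t : ℂ) * Complex.I) * g x := by
    filter_upwards [hTWfull, heig'] with x hTxW heigx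
    have hxW : x ∈ W := hTW x hTxW
    by_cases hxY : x ∈ Y
    · have hfx : g x = f' x := hgY x hxY
      have hm : τ x = h (T x) + 1 := fact4 x hxY hTxW
      have hTiter : T^[h (T x)] (T x) = T^[τ x] x := by
        rw [hm, Function.iterate_succ_apply]
      have hgTx : g (T x) = Complex.exp (-(t : ℂ) * ((h (T x) : ℕ) : ℂ) * Complex.I)
          * f' (T^[h (T x)] (T x)) := Set.indicator_of_mem hTxW _
      rw [hgTx, hTiter, heigx hxY, hfx, hm, ← mul_assoc, ← Complex.exp_add]
      congr 2
      push_cast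
      ring
    · have hx0 : h x ≠ 0 := by
        intro h0
        have := fact1 x hxW
        rw [h0] at this
        exact hxY this
      obtain ⟨k, hk⟩ := Nat.exists_eq_succ_of_ne_zero hx0
      have hkY : T^[k + 1] x ∈ Y := by
        rw [← Nat.succ_eq_add_one, ← hk]
        exact fact1 x hxW
      have hhTx : h (T x) = k := by
        apply le_antisymm
        · exact Nat.sInf_le (by rw [Set.mem_setOf_eq, ← Function.iterate_succ_apply]; exact hkY)
        · refine le_csInf ⟨k, by rw [Set.mem_setOf_eq, ← Function.iterate_succ_apply]; exact hkY⟩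
            fun m hm => ?_
        
          have : h x ≤ m + 1 := Nat.sInf_le (by rw [Set.mem_setOf_eq, Function.iterate_succ_apply]; exact hm)
          omega
      rw [hgdef, Set.indicator_of_mem hTxW, Set.indicator_of_mem hxW, hhTx, hk,
        ← Function.iterate_succ_apply, ← mul_assoc, ← Complex.exp_add]
      congr 2
      push_cast
      ring
  obtain ⟨ht, c, hc⟩ := hwm g t ht0 ht2 hgL2 hgne hgeig
  refine ⟨ht, c, ?_⟩
  have hY' : f' =ᵐ[μ.restrict Y] fun _ => c := by
    filter_upwards [ae_restrict_of_ae hc, ae_restrict_mem hY] with x h1 h2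
    rw [← hgY x h2]
    exact h1
  have hcne : c ≠ 0 := by
    intro hc0
    rw [hc0] at hY'
    have hsub : {x | f₀ x ≠ 0 ∧ ‖f₀ x‖ ≤ (M : ℝ)} ⊆ {x | f' x ≠ 0} := by
      rintro x ⟨hne0, hle⟩
      rw [Set.mem_setOf_eq, hf'def]
      simp only [if_pos hle]
      exact hne0
    have hz : (μ.restrict Y) {x | f₀ x ≠ 0 ∧ ‖f₀ x‖ ≤ (M : ℝ)} = 0 :=
      measure_mono_null hsub (ae_iff.mp hY')
    rw [hz] at hM
    exact lt_irrefl _ hM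
  refine (haeY fun x => f x = c).mpr ?_
  filter_upwards [hY', hff₀] with x h1 h2
  rw [h2]
  by_cases hle : ‖f₀ x‖ ≤ (M : ℝ)
  · rw [hf'def] at h1
    simp only [if_pos hle] at h1
    exact h1
  · rw [hf'def] at h1
    simp only [if_neg hle] at h1
    exact absurd h1.symm hcne
end

section
/- The first return time of an ergodic measure-preserving system (X,T,μ) to a positive-measure set Y is aperiodic if and only if (X,T,μ) is weakly mixing. -/
open MeasureTheory Filter
open scoped ENNReal Topology

section FirstHit

variable {X : Type*} {T : X → X} {Y : Set X}

/-- First hitting time of `Y` (possibly `0` via `sInf ∅ = 0` if the orbit never hits `Y`). -/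
private noncomputable def fhit (T : X → X) (Y : Set X) (x : X) : ℕ :=
  sInf {k | T^[k] x ∈ Y}

private lemma fhit_mem {x : X} (h : ∃ k, T^[k] x ∈ Y) : T^[fhit T Y x] x ∈ Y :=
  Nat.sInf_mem h

private lemma fhit_eq_zero {x : X} (h : x ∈ Y) : fhit T Y x = 0 :=
  Nat.sInf_eq_zero.mpr (Or.inl (by simpa using h))

private lemma fhit_succ {x : X} (hx : x ∉ Y) (h : ∃ k, T^[k] x ∈ Y) :
    fhit T Y (T x) + 1 = fhit T Y x := by
  have h1 : 1 ≤ fhit T Y x := by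
    rcases Nat.eq_zero_or_pos (fhit T Y x) with h0 | h0
    · exact absurd (by simpa [h0] using fhit_mem (T := T) (Y := Y) h) hx
    · exact h0
  have hmem' : (fhit T Y x - 1) ∈ {k | T^[k] (T x) ∈ Y} := by
    show T^[fhit T Y x - 1] (T x) ∈ Y
    have e : T^[fhit T Y x - 1 + 1] x = T^[fhit T Y x - 1] (T x) :=
      Function.iterate_succ_apply T _ x
    rw [Nat.sub_add_cancel h1] at e
    rw [← e]
    exact fhit_mem h
  have hle : fhit T Y (T x) ≤ fhit T Y x - 1 := Nat.sInf_le hmem'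
  have hge : ¬ fhit T Y (T x) < fhit T Y x - 1 := by
    intro hlt
    have hmem'' : T^[fhit T Y (T x)] (T x) ∈ Y := fhit_mem ⟨_, hmem'⟩
    have h3 : T^[fhit T Y (T x) + 1] x ∈ Y := by
      rwa [Function.iterate_succ_apply]
    exact Nat.notMem_of_lt_sInf (show fhit T Y (T x) + 1 < fhit T Y x by omega) h3
  omega

private lemma fhit_comm {x : X} (hx : x ∉ Y) (h : ∃ k, T^[k] x ∈ Y) :
    T^[fhit T Y (T x)] (T x) = T^[fhit T Y x] x := by
  conv_rhs => rw [← fhit_succ hx h]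
  rw [Function.iterate_succ_apply]

private lemma fhit_ret {y : X} (hy : y ∈ Y) (h : ∃ k, T^[k] (T y) ∈ Y) :
    1 ≤ sInf {m | 1 ≤ m ∧ T^[m] y ∈ Y} ∧ T^[sInf {m | 1 ≤ m ∧ T^[m] y ∈ Y}] y ∈ Y ∧
      fhit T Y (T y) + 1 = sInf {m | 1 ≤ m ∧ T^[m] y ∈ Y} := by
  obtain ⟨k, hk⟩ := h
  have hne : Set.Nonempty {m | 1 ≤ m ∧ T^[m] y ∈ Y} :=
    ⟨k + 1, Nat.succ_le_succ (Nat.zero_le k), by rwa [Function.iterate_succ_apply]⟩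
  obtain ⟨h1, h2⟩ := Nat.sInf_mem hne
  refine ⟨h1, h2, ?_⟩
  have hmem' : (sInf {m | 1 ≤ m ∧ T^[m] y ∈ Y} - 1) ∈ {k | T^[k] (T y) ∈ Y} := by
    show T^[sInf {m | 1 ≤ m ∧ T^[m] y ∈ Y} - 1] (T y) ∈ Y
    have e : T^[sInf {m | 1 ≤ m ∧ T^[m] y ∈ Y} - 1 + 1] y
        = T^[sInf {m | 1 ≤ m ∧ T^[m] y ∈ Y} - 1] (T y) :=
      Function.iterate_succ_apply T _ y
    rw [Nat.sub_add_cancel h1] at e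
    rw [← e]
    exact h2
  have hle : fhit T Y (T y) ≤ sInf {m | 1 ≤ m ∧ T^[m] y ∈ Y} - 1 := Nat.sInf_le hmem'
  have hge : ¬ fhit T Y (T y) < sInf {m | 1 ≤ m ∧ T^[m] y ∈ Y} - 1 := by
    intro hlt
    have hmem'' : T^[fhit T Y (T y)] (T y) ∈ Y := fhit_mem ⟨_, hmem'⟩
    have h3 : T^[fhit T Y (T y) + 1] y ∈ Y := by rwa [Function.iterate_succ_apply]
    exact Nat.notMem_of_lt_sInf
      (show fhit T Y (T y) + 1 < sInf {m | 1 ≤ m ∧ T^[m] y ∈ Y} by omega)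
      ⟨Nat.succ_le_succ (Nat.zero_le _), h3⟩
  omega

private lemma fhit_measurable [MeasurableSpace X] (hT : Measurable T) (hY : MeasurableSet Y) :
    Measurable (fhit T Y) := by
  have hTn : ∀ n : ℕ, Measurable (T^[n]) := fun n => hT.iterate n
  apply measurable_to_countable'
  intro k
  have hset : fhit T Y ⁻¹' {k} =
      ((T^[k] ⁻¹' Y ∩ ⋂ j ∈ Set.Iio k, T^[j] ⁻¹' Yᶜ) ∪
        ({_x : X | k = 0} ∩ ⋂ j, T^[j] ⁻¹' Yᶜ)) := by
    ext x
    simp only [Set.mem_preimage, Set.mem_singleton_iff, Set.mem_union, Set.mem_inter_iff,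
      Set.mem_iInter, Set.mem_Iio, Set.mem_compl_iff, Set.mem_setOf_eq]
    constructor
    · rintro rfl
      by_cases hne : Set.Nonempty {j | T^[j] x ∈ Y}
      · exact Or.inl ⟨fhit_mem hne, fun j hj => Nat.notMem_of_lt_sInf hj⟩
      · right
        rw [Set.not_nonempty_iff_eq_empty] at hne
        constructor
        · show fhit T Y x = 0
          unfold fhit
          rw [hne, Nat.sInf_empty]
        · intro j hj
          exact (Set.eq_empty_iff_forall_notMem.mp hne j) hj
    · rintro (⟨h1, h2⟩ | ⟨hk0, h2⟩)
      · refine le_antisymm (Nat.sInf_le h1) ?_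
        by_contra hlt
        push_neg at hlt
        exact h2 _ hlt (fhit_mem ⟨k, h1⟩)
      · subst hk0
        have he : {j | T^[j] x ∈ Y} = ∅ := Set.eq_empty_iff_forall_notMem.mpr h2
        show fhit T Y x = 0
        unfold fhit
        rw [he, Nat.sInf_empty]
  rw [hset]
  exact (((hTn k) hY).inter
      (MeasurableSet.biInter (Set.to_countable _) fun j _ => (hTn j) hY.compl)).union
    ((MeasurableSet.const (k = 0)).inter (MeasurableSet.iInter fun j => (hTn j) hY.compl))

end FirstHit

/-- The first return time to a positive measure set is aperiodic if and only if the
system is weakly mixing. -/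
theorem stmt2 {X : Type*} [MeasurableSpace X] (μ : Measure X) [IsProbabilityMeasure μ]
    (T : X → X) (hT : MeasurePreserving T μ μ) (hErg : Ergodic T μ)
    (Y : Set X) (hY : MeasurableSet Y) (hYpos : 0 < μ Y)
    (τ : X → ℕ) (hτ : ∀ y ∈ Y, τ y = sInf {n : ℕ | 1 ≤ n ∧ T^[n] y ∈ Y})
    (μY : Measure X) (hμY : μY = (μ Y)⁻¹ • μ.restrict Y) :
    (∀ (f : X → ℂ) (t : ℝ), 0 ≤ t → t < 2 * Real.pi →
      MemLp f 2 μY → ¬ f =ᵐ[μY] 0 →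
      (∀ᵐ y ∂μY, f (T^[τ y] y) = Complex.exp ((t : ℂ) * (τ y : ℂ) * Complex.I) * f y) →
      t = 0 ∧ ∃ c : ℂ, f =ᵐ[μY] fun _ => c) ↔
    (∀ (g : X → ℂ) (t : ℝ), 0 ≤ t → t < 2 * Real.pi →
      MemLp g 2 μ → ¬ g =ᵐ[μ] 0 →
      (∀ᵐ x ∂μ, g (T x) = Complex.exp ((t : ℂ) * Complex.I) * g x) →
      t = 0 ∧ ∃ c : ℂ, g =ᵐ[μ] fun _ => c) := by
  classical
  have hYfin : μ Y ≠ ∞ := measure_ne_top μ Y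
  have hYne : μ Y ≠ 0 := hYpos.ne'
  have hc0 : (μ Y)⁻¹ ≠ 0 := ENNReal.inv_ne_zero.mpr hYfin
  have hcfin : (μ Y)⁻¹ ≠ ∞ := ENNReal.inv_ne_top.mpr hYne
  have hae_iff : ∀ {p : X → Prop}, (∀ᵐ x ∂μY, p x) ↔ (∀ᵐ x ∂(μ.restrict Y), p x) := by
    intro p
    rw [hμY]
    simp [ae_iff, hc0]
  have hACr : μ.restrict Y ≪ μ :=
    Measure.absolutelyContinuous_of_le Measure.restrict_le_self
  have hAC : μY ≪ μ := by
    intro s hs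
    rw [hμY]
    simp [hACr hs]
  have hμYuniv : μY Set.univ = 1 := by
    rw [hμY]
    simp only [Measure.smul_apply, Measure.restrict_apply_univ, smul_eq_mul]
    exact ENNReal.inv_mul_cancel hYne hYfin
  have hμYne : μY ≠ 0 := by
    intro h
    rw [h] at hμYuniv
    simp at hμYuniv
  constructor
  · -- aperiodicity of the return time implies weak mixing
    intro hAp g t ht0 ht2 hL2 hg0 heig
    have habs1 : ‖Complex.exp ((t : ℂ) * Complex.I)‖ = 1 := by
      rw [Complex.norm_exp]
      simp
    have hnormInv : (fun x => ‖g x‖) ∘ T =ᵐ[μ] fun x => ‖g x‖ := by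
      filter_upwards [heig] with x hx
      simp only [Function.comp_apply, hx, norm_mul, habs1, one_mul]
    obtain ⟨cn, hcn⟩ :=
      hErg.ae_eq_const_of_ae_eq_comp_ae hL2.aestronglyMeasurable.norm hnormInv
    have hcn0 : cn ≠ 0 := by
      rintro rfl
      exact hg0 (hcn.mono fun x hx => norm_eq_zero.mp hx)
    have hIter : ∀ n : ℕ, ∀ᵐ x ∂μ,
        g (T^[n] x) = Complex.exp ((t : ℂ) * (n : ℂ) * Complex.I) * g x := by
      intro n
      induction n with
      | zero => simp
      | succ n ih =>
        have h2 := (hT.iterate n).quasiMeasurePreserving.ae heig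
        filter_upwards [ih, h2] with x h1 h2'
        rw [Function.iterate_succ_apply', h2', h1, ← mul_assoc, ← Complex.exp_add]
        congr 2
        push_cast
        ring
    have hAll : ∀ᵐ x ∂μ, ∀ n : ℕ,
        g (T^[n] x) = Complex.exp ((t : ℂ) * (n : ℂ) * Complex.I) * g x :=
      ae_all_iff.mpr hIter
    have heigY : ∀ᵐ y ∂μY,
        g (T^[τ y] y) = Complex.exp ((t : ℂ) * (τ y : ℂ) * Complex.I) * g y :=
      (hAll.filter_mono hAC.ae_le).mono fun y hy => hy (τ y)
    have hL2Y : MemLp g 2 μY := by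
      rw [hμY]
      exact (hL2.mono_measure Measure.restrict_le_self).smul_measure hcfin
    have hg0Y : ¬ g =ᵐ[μY] 0 := by
      intro h0
      have h1 : ∀ᵐ y ∂μY, ‖g y‖ = cn := hcn.filter_mono hAC.ae_le
      have hFalse : ∀ᵐ _y ∂μY, False := by
        filter_upwards [h0, h1] with y hy0 hy1
        rw [Pi.zero_apply] at hy0
        rw [hy0, norm_zero] at hy1
        exact hcn0 hy1.symm
      haveI : (ae μY).NeBot := ae_neBot.mpr hμYne
      obtain ⟨x, hx⟩ := hFalse.exists
      exact hx
    obtain ⟨ht', -⟩ := hAp g t ht0 ht2 hL2Y hg0Y heigY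
    refine ⟨ht', ?_⟩
    subst ht'
    have hinv : g ∘ T =ᵐ[μ] g := by
      filter_upwards [heig] with x hx
      simpa using hx
    exact hErg.ae_eq_const_of_ae_eq_comp_ae hL2.aestronglyMeasurable hinv
  · -- weak mixing implies aperiodicity of the return time
    intro hWM f t ht0 ht2 hL2 hf0 heig
    -- The union of preimages of `Y` is a.e. everything
    have hAmeas : MeasurableSet (⋃ n, T^[n] ⁻¹' Y) :=
      MeasurableSet.iUnion fun n => (hT.measurable.iterate n) hY
    have hAmem : ∀ x, x ∈ (⋃ n, T^[n] ⁻¹' Y) ↔ ∃ k, T^[k] x ∈ Y := fun x => by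
      simp [Set.mem_iUnion]
    have hAfull : ∀ᵐ x ∂μ, x ∈ (⋃ n, T^[n] ⁻¹' Y) := by
      have hsub : T ⁻¹' (⋃ n, T^[n] ⁻¹' Y) ⊆ (⋃ n, T^[n] ⁻¹' Y) := by
        intro x hx
        rw [Set.mem_preimage, hAmem] at hx
        obtain ⟨k, hk⟩ := hx
        rw [hAmem]
        exact ⟨k + 1, by rwa [Function.iterate_succ_apply]⟩
      rcases hErg.ae_empty_or_univ_of_preimage_ae_le hAmeas.nullMeasurableSet
          hsub.eventuallyLE with h | h
      · exfalso
        have hz : μ (⋃ n, T^[n] ⁻¹' Y) = 0 := ae_eq_empty.mp h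
        have hYA : Y ⊆ ⋃ n, T^[n] ⁻¹' Y := fun y hy => (hAmem y).mpr ⟨0, by simpa using hy⟩
        exact hYne (le_antisymm (hz ▸ measure_mono hYA) (zero_le))
      · rw [ae_iff]
        have h0 := ae_eq_univ.mp h
        refine measure_mono_null (fun a ha => ?_) h0
        exact ha
    -- measurable representative of f
    set f' : X → ℂ := hL2.aestronglyMeasurable.mk f with hf'_def
    have hf'sm : StronglyMeasurable f' := hL2.aestronglyMeasurable.stronglyMeasurable_mk
    have hff' : f =ᵐ[μY] f' := hL2.aestronglyMeasurable.ae_eq_mk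
    -- the tower function
    set g : X → ℂ :=
      fun x => Complex.exp (-((t : ℂ) * (fhit T Y x : ℂ)) * Complex.I) * f' (T^[fhit T Y x] x)
      with hg_def
    have hgY : ∀ x ∈ Y, g x = f' x := by
      intro x hx
      rw [hg_def]
      simp [fhit_eq_zero hx]
    have hφ : Measurable fun x => T^[fhit T Y x] x := by
      have h1 : Measurable fun p : X × ℕ => T^[p.2] p.1 :=
        measurable_from_prod_countable_left fun n => hT.measurable.iterate n
      exact h1.comp (measurable_id.prodMk (fhit_measurable hT.measurable hY))
    have hgsm : StronglyMeasurable g := by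
      apply StronglyMeasurable.mul
      · apply Measurable.stronglyMeasurable
        apply Complex.measurable_exp.comp
        apply Measurable.mul _ measurable_const
        apply Measurable.neg
        exact measurable_const.mul
          ((measurable_of_countable _).comp (fhit_measurable hT.measurable hY))
      · exact hf'sm.comp_measurable hφ
    -- f' satisfies the eigen-equation a.e. on Y
    have h_base : ∀ᵐ y ∂(μ.restrict Y),
        f (T^[τ y] y) = Complex.exp ((t : ℂ) * (τ y : ℂ) * Complex.I) * f y :=
      hae_iff.mp heig
    have h_fy : ∀ᵐ y ∂(μ.restrict Y), f y = f' y := hae_iff.mp hff'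
    have hZnull : μ ({x | f x ≠ f' x} ∩ Y) = 0 := by
      have := ae_iff.mp h_fy
      rwa [Measure.restrict_apply' hY] at this
    obtain ⟨N, hNsub, hNmeas, hNnull⟩ := exists_measurable_superset_of_null hZnull
    have h_never : ∀ᵐ x ∂μ, ∀ m : ℕ, T^[m] x ∉ N := by
      rw [ae_all_iff]
      intro m
      have hN' : ∀ᵐ x ∂μ, x ∉ N := measure_eq_zero_iff_ae_notMem.mp hNnull
      exact (hT.iterate m).quasiMeasurePreserving.ae hN'
    have heig' : ∀ᵐ y ∂(μ.restrict Y), y ∈ Y → T y ∈ (⋃ n, T^[n] ⁻¹' Y) →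
        f' (T^[τ y] y) = Complex.exp ((t : ℂ) * (τ y : ℂ) * Complex.I) * f' y := by
      filter_upwards [h_base, h_fy, ae_restrict_of_ae h_never] with y hb hfy hnev hyY hTyA
      obtain ⟨h1, h2, h3⟩ := fhit_ret (T := T) hyY ((hAmem (T y)).mp hTyA)
      rw [← hτ y hyY] at h2
      have hnotZ : f (T^[τ y] y) = f' (T^[τ y] y) := by
        by_contra hne
        exact hnev (τ y) (hNsub ⟨hne, h2⟩)
      rw [← hnotZ, hb, hfy]
    have h_onY : ∀ᵐ x ∂μ, x ∈ Y → (T x ∈ (⋃ n, T^[n] ⁻¹' Y) →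
        f' (T^[τ x] x) = Complex.exp ((t : ℂ) * (τ x : ℂ) * Complex.I) * f' x) := by
      have := ae_imp_of_ae_restrict heig'
      filter_upwards [this] with x hx hxY hTxA
      exact hx hxY hxY hTxA
    -- the eigen-equation for g
    have hG : ∀ᵐ x ∂μ, g (T x) = Complex.exp ((t : ℂ) * Complex.I) * g x := by
      filter_upwards [hAfull, hT.quasiMeasurePreserving.ae hAfull, h_onY]
        with x hxA hTxA hxY
      by_cases hxYm : x ∈ Y
      · obtain ⟨h1, h2, h3⟩ := fhit_ret (T := T) hxYm ((hAmem (T x)).mp hTxA)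
        rw [← hτ x hxYm] at h1 h2 h3
        have e1 : T^[fhit T Y (T x)] (T x) = T^[τ x] x := by
          have e : T^[fhit T Y (T x) + 1] x = T^[fhit T Y (T x)] (T x) :=
            Function.iterate_succ_apply T _ x
          rw [h3] at e
          exact e.symm
        have e2 : fhit T Y (T x) = τ x - 1 := by omega
        have egx : g x = f' x := hgY x hxYm
        have egTx : g (T x) = Complex.exp (-((t : ℂ) * (fhit T Y (T x) : ℂ)) * Complex.I) *
            f' (T^[fhit T Y (T x)] (T x)) := by rw [hg_def]
        rw [egx, egTx, e1, hxY hxYm hTxA, e2, ← mul_assoc, ← Complex.exp_add]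
        congr 2
        push_cast [Nat.cast_sub h1]
        ring
      · have hne : ∃ k, T^[k] x ∈ Y := (hAmem x).mp hxA
        have h1 := fhit_succ hxYm hne
        have h2 := fhit_comm hxYm hne
        have egx : g x = Complex.exp (-((t : ℂ) * (fhit T Y x : ℂ)) * Complex.I) *
            f' (T^[fhit T Y x] x) := by rw [hg_def]
        have egTx : g (T x) = Complex.exp (-((t : ℂ) * (fhit T Y (T x) : ℂ)) * Complex.I) *
            f' (T^[fhit T Y (T x)] (T x)) := by rw [hg_def]
        rw [egx, egTx, h2, ← mul_assoc, ← Complex.exp_add]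
        congr 2
        rw [← h1]
        push_cast
        ring
    -- g is bounded, hence in L²
    have habs1 : ‖Complex.exp ((t : ℂ) * Complex.I)‖ = 1 := by
      rw [Complex.norm_exp]
      simp
    have hnormInv : (fun x => ‖g x‖) ∘ T =ᵐ[μ] fun x => ‖g x‖ := by
      filter_upwards [hG] with x hx
      simp only [Function.comp_apply, hx, norm_mul, habs1, one_mul]
    obtain ⟨cn, hcn⟩ :=
      hErg.ae_eq_const_of_ae_eq_comp_ae hgsm.aestronglyMeasurable.norm hnormInv
    have hMem : MemLp g 2 μ :=
      MemLp.of_bound hgsm.aestronglyMeasurable cn (hcn.mono fun x hx => le_of_eq hx)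
    have hgne : ¬ g =ᵐ[μ] 0 := by
      intro hg0
      apply hf0
      have h1 : ∀ᵐ x ∂(μ.restrict Y), g x = 0 := ae_restrict_of_ae hg0
      have h2 : ∀ᵐ x ∂(μ.restrict Y), f x = 0 := by
        filter_upwards [h1, ae_restrict_mem hY, h_fy] with x ha hb hc
        rw [hc, ← hgY x hb, ha]
      exact hae_iff.mpr h2
    obtain ⟨ht', c, hc⟩ := hWM g t ht0 ht2 hMem hgne hG
    refine ⟨ht', c, ?_⟩
    apply hae_iff.mpr
    filter_upwards [h_fy, ae_restrict_mem hY, ae_restrict_of_ae hc] with x h1 h2 h3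
    rw [h1, ← hgY x h2, h3]
end

section
/- Suppose (X,T,μ) is a probability-measure-preserving system, (A_n) a sequence of measurable sets with ∑ μ(A_n) = ∞, and assume there are constants C > 0, 0 < θ < 1 with |μ(T^{-(j-i)}A_j ∩ A_i) − μ(A_j)μ(A_i)| ≤ C θ^{j−i} μ(A_i) for all i < j. Then for μ-a.e. x, setting E_n = ∑_{j=1}^n μ(A_j), we have (1/E_n) #{1 ≤ j ≤ n : T^j x ∈ A_j} → 1; in particular T^j x ∈ A_j for infinitely many j, μ-a.e. -/
open MeasureTheory Filter
open scoped Topology Classical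

private lemma sbc_geom {θ : ℝ} (hθ0 : 0 < θ) (hθ1 : θ < 1) (i n : ℕ) :
    ∑ j ∈ (Finset.Icc 1 n).filter (fun j => i < j), θ ^ (j - i) ≤ θ / (1 - θ) := by
  have h1 : ∑ j ∈ (Finset.Icc 1 n).filter (fun j => i < j), θ ^ (j - i) ≤
      ∑ j ∈ Finset.Ico (i + 1) (n + 1), θ ^ (j - i) := by
    apply Finset.sum_le_sum_of_subset_of_nonneg
    · intro j hj
      simp only [Finset.mem_filter, Finset.mem_Icc] at hj
      simp only [Finset.mem_Ico]
      omega
    · intro j _ _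
      positivity
  refine h1.trans ?_
  rw [Finset.sum_Ico_eq_sum_range]
  have h2 : ∀ k : ℕ, θ ^ (i + 1 + k - i) = θ * θ ^ k := by
    intro k
    have : i + 1 + k - i = k + 1 := by omega
    rw [this, pow_succ]
    ring
  simp only [h2]
  rw [← Finset.mul_sum]
  rw [div_eq_mul_inv]
  apply mul_le_mul_of_nonneg_left _ hθ0.le
  rw [geom_sum_eq hθ1.ne]
  rw [div_le_iff_of_neg (by linarith : θ - 1 < 0)]
  have : θ ^ (n + 1 - (i + 1)) ≥ 0 := by positivity
  have h4 : (0:ℝ) < 1 - θ := by linarith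
  have h3 : (1 - θ)⁻¹ > 0 := by positivity
  nlinarith [mul_pos h3 (sub_pos.2 hθ1), inv_mul_cancel₀ (by linarith : (1:ℝ) - θ ≠ 0)]


private lemma sbc_sandwich {S E : ℕ → ℝ} {φ : ℕ → ℕ}
    (hS0 : ∀ n, 0 ≤ S n) (hSmono : Monotone S) (hEmono : Monotone E)
    (hEtop : Tendsto E atTop atTop)
    (hφ : StrictMono φ)
    (hratio : Tendsto (fun k => E (φ (k + 1)) / E (φ k)) atTop (𝓝 1))
    (hsub : Tendsto (fun k => S (φ k) / E (φ k)) atTop (𝓝 1)) :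
    Tendsto (fun n => S n / E n) atTop (𝓝 1) := by
  set κ : ℕ → ℕ := fun n => Nat.findGreatest (fun k => φ k ≤ n) n with hκ
  have hκtop : Tendsto κ atTop atTop := by
    refine tendsto_atTop.2 fun K => ?_
    filter_upwards [eventually_ge_atTop (φ K)] with n hn
    exact Nat.le_findGreatest (P := fun k => φ k ≤ n) (le_trans (hφ.le_apply) hn) hn
  have hκle : ∀ n, φ 0 ≤ n → φ (κ n) ≤ n := fun n hn =>
    Nat.findGreatest_spec (P := fun k => φ k ≤ n) (Nat.zero_le n) hn
  have hκlt : ∀ n, n < φ (κ n + 1) := by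
    intro n
    by_contra h
    push_neg at h
    have h1 : κ n + 1 ≤ n := le_trans (hφ.le_apply) h
    have := Nat.le_findGreatest (P := fun k => φ k ≤ n) h1 h
    simp only [hκ] at this
    omega
  -- limits of the comparison sequences
  have hinv : Tendsto (fun k => E (φ k) / E (φ (k + 1))) atTop (𝓝 1) := by
    have := (hratio.inv₀ one_ne_zero)
    simpa [inv_div] using this
  have hsub' : Tendsto (fun k => S (φ (k + 1)) / E (φ (k + 1))) atTop (𝓝 1) :=
    hsub.comp (tendsto_add_atTop_nat 1)
  have hg : Tendsto (fun k => S (φ (k + 1)) / E (φ (k + 1)) * (E (φ (k + 1)) / E (φ k)))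
      atTop (𝓝 1) := by simpa using hsub'.mul hratio
  have hh : Tendsto (fun k => S (φ k) / E (φ k) * (E (φ k) / E (φ (k + 1))))
      atTop (𝓝 1) := by simpa using hsub.mul hinv
  -- eventual positivity
  obtain ⟨N, hN⟩ := (tendsto_atTop.1 hEtop 1).exists_forall_of_atTop
  refine tendsto_of_tendsto_of_tendsto_of_le_of_le' (hh.comp hκtop) (hg.comp hκtop) ?_ ?_
  · filter_upwards [hκtop.eventually_ge_atTop N, eventually_ge_atTop (φ 0)] with n hn1 hn2
    set k := κ n with hk
    have hφk : φ k ≤ n := hκle n hn2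
    have hp1 : (0:ℝ) < E (φ k) := lt_of_lt_of_le one_pos (hN _ (le_trans hn1 hφ.le_apply))
    have hp2 : (0:ℝ) < E n := lt_of_lt_of_le hp1 (hEmono hφk)
    have hp3 : (0:ℝ) < E (φ (k + 1)) := lt_of_lt_of_le hp1 (hEmono (hφ.monotone (Nat.le_succ k)))
    have heq : S (φ k) / E (φ k) * (E (φ k) / E (φ (k + 1))) = S (φ k) / E (φ (k + 1)) := by
      field_simp
    rw [Function.comp_apply, ← hk, heq]
    exact div_le_div₀ (hS0 n) (hSmono hφk) hp2 (hEmono (hκlt n).le)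
  · filter_upwards [hκtop.eventually_ge_atTop N, eventually_ge_atTop (φ 0)] with n hn1 hn2
    set k := κ n with hk
    have hφk : φ k ≤ n := hκle n hn2
    have hp1 : (0:ℝ) < E (φ k) := lt_of_lt_of_le one_pos (hN _ (le_trans hn1 hφ.le_apply))
    have hp2 : (0:ℝ) < E n := lt_of_lt_of_le hp1 (hEmono hφk)
    have hp3 : (0:ℝ) < E (φ (k + 1)) := lt_of_lt_of_le hp1 (hEmono (hφ.monotone (Nat.le_succ k)))
    have heq : S (φ (k + 1)) / E (φ (k + 1)) * (E (φ (k + 1)) / E (φ k)) =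
        S (φ (k + 1)) / E (φ k) := by field_simp
    rw [Function.comp_apply, ← hk, heq]
    exact div_le_div₀ (hS0 _) (hSmono (hκlt n).le) hp1 (hEmono hφk)


/-- Strong Borel–Cantelli lemma for a sequence of sets with exponentially decaying
pair correlations; in particular the Borel–Cantelli property holds. -/
theorem stmt7 {X : Type*} [MeasurableSpace X] (μ : Measure X) [IsProbabilityMeasure μ]
    (T : X → X) (hT : MeasurePreserving T μ μ)
    (A : ℕ → Set X) (hA : ∀ n, MeasurableSet (A n))
    (C θ : ℝ) (hC : 0 < C) (hθ0 : 0 < θ) (hθ1 : θ < 1)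
    (hdecay : ∀ i j : ℕ, i < j →
      |(μ (T^[j - i] ⁻¹' A j ∩ A i)).toReal - (μ (A j)).toReal * (μ (A i)).toReal| ≤
        C * θ ^ (j - i) * (μ (A i)).toReal)
    (hE : Tendsto (fun n : ℕ => ∑ j ∈ Finset.Icc 1 n, (μ (A j)).toReal) atTop atTop) :
    ∀ᵐ x ∂μ,
      Tendsto (fun n : ℕ =>
          (((Finset.Icc 1 n).filter (fun j => T^[j] x ∈ A j)).card : ℝ) /
            (∑ j ∈ Finset.Icc 1 n, (μ (A j)).toReal)) atTop (𝓝 1) ∧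
      {j : ℕ | T^[j] x ∈ A j}.Infinite := by
  have hTj : ∀ j : ℕ, MeasurePreserving (T^[j]) μ μ := fun j => hT.iterate j
  set p : ℕ → ℝ := fun j => (μ (A j)).toReal with hp
  set F : ℕ → X → ℝ := fun j => (T^[j] ⁻¹' A j).indicator 1 with hF
  have hAj : ∀ j, MeasurableSet (T^[j] ⁻¹' A j) := fun j => (hTj j).measurable (hA j)
  have hmeasF : ∀ j, Measurable (F j) := fun j => measurable_one.indicator (hAj j)
  have hFnn : ∀ j x, 0 ≤ F j x := fun j x => Set.indicator_nonneg (fun _ _ => zero_le_one) x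
  have hFle : ∀ j x, F j x ≤ 1 := by
    intro j x
    by_cases h : x ∈ T^[j] ⁻¹' A j <;>
      simp [hF, Set.indicator_of_mem, Set.indicator_of_notMem, h]
  have hFint : ∀ j, Integrable (F j) μ := fun j => (integrable_const 1).indicator (hAj j)
  have hintF : ∀ j, ∫ x, F j x ∂μ = p j := by
    intro j
    rw [hF]
    rw [integral_indicator_one (hAj j), measureReal_def, (hTj j).measure_preimage (hA j).nullMeasurableSet]
  have hFmul : ∀ i j, (fun x => F i x * F j x) =
      (T^[i] ⁻¹' A i ∩ T^[j] ⁻¹' A j).indicator 1 := by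
    intro i j
    rw [Set.inter_indicator_one]
    rfl
  have hprodint : ∀ i j, Integrable (fun x => F i x * F j x) μ := by
    intro i j
    rw [hFmul]
    exact (integrable_const 1).indicator ((hAj i).inter (hAj j))
  have hintmul : ∀ i j, ∫ x, F i x * F j x ∂μ =
      (μ (T^[i] ⁻¹' A i ∩ T^[j] ⁻¹' A j)).toReal := by
    intro i j
    rw [hFmul, integral_indicator_one ((hAj i).inter (hAj j)), measureReal_def]
  -- preimage identity for i ≤ j
  have hpre : ∀ i j : ℕ, i ≤ j →
      μ (T^[i] ⁻¹' A i ∩ T^[j] ⁻¹' A j) = μ (T^[j-i] ⁻¹' A j ∩ A i) := by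
    intro i j hij
    have hiter : ∀ x, T^[j] x = T^[j-i] (T^[i] x) := by
      intro x
      conv_lhs => rw [show j = (j-i) + i by omega]
      rw [Function.iterate_add_apply]
    have h1 : T^[j] ⁻¹' A j = T^[i] ⁻¹' (T^[j-i] ⁻¹' A j) := by
      ext x
      simp [Set.mem_preimage, hiter x]
    rw [h1, ← Set.preimage_inter, (hTj i).measure_preimage
      ((hA i).inter ((hTj (j-i)).measurable (hA j))).nullMeasurableSet, Set.inter_comm]
  have hpnn : ∀ j, 0 ≤ p j := fun j => ENNReal.toReal_nonneg
  have hple : ∀ j, p j ≤ 1 := by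
    intro j
    have h1 : μ (A j) ≤ 1 := prob_le_one
    calc p j ≤ (1 : ENNReal).toReal := ENNReal.toReal_mono ENNReal.one_ne_top h1
      _ = 1 := by simp
  have hcint : ∀ i j, Integrable (fun x => (F i x - p i) * (F j x - p j)) μ := by
    intro i j
    have e : (fun x => (F i x - p i) * (F j x - p j)) =
        fun x => F i x * F j x - p i * F j x - p j * F i x + p i * p j := by
      funext x; ring
    rw [e]
    exact (((hprodint i j).sub ((hFint j).const_mul (p i))).sub
      ((hFint i).const_mul (p j))).add (integrable_const _)
  have hcov : ∀ i j, ∫ x, (F i x - p i) * (F j x - p j) ∂μ =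
      (μ (T^[i] ⁻¹' A i ∩ T^[j] ⁻¹' A j)).toReal - p i * p j := by
    intro i j
    have e : (fun x => (F i x - p i) * (F j x - p j)) =
        fun x => (F i x * F j x - p i * F j x - p j * F i x) + p i * p j := by
      funext x; ring
    have h1 : Integrable (fun x => F i x * F j x - p i * F j x) μ :=
      (hprodint i j).sub ((hFint j).const_mul (p i))
    have h2 : Integrable (fun x => F i x * F j x - p i * F j x - p j * F i x) μ :=
      h1.sub ((hFint i).const_mul (p j))
    rw [e, integral_add h2 (integrable_const _), integral_sub h1 ((hFint i).const_mul (p j)),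
      integral_sub (hprodint i j) ((hFint j).const_mul (p i)),
      integral_const_mul, integral_const_mul, hintF, hintF, hintmul, integral_const]
    simp only [measure_univ, ENNReal.toReal_one, smul_eq_mul, one_smul, probReal_univ]
    ring
  -- pointwise covariance bounds
  have hcovbound : ∀ i j : ℕ, ∫ x, (F i x - p i) * (F j x - p j) ∂μ ≤
      (if i = j then p i else 0) + (if i < j then C * θ ^ (j - i) * p i else 0) +
        (if j < i then C * θ ^ (i - j) * p j else 0) := by
    intro i j
    rcases lt_trichotomy i j with hij | hij | hij
    · rw [hcov, hpre i j hij.le]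
      have := hdecay i j hij
      rw [if_neg hij.ne, if_pos hij, if_neg (by omega)]
      rw [hp] at *
      nlinarith [abs_le.1 this]
    · subst hij
      rw [hcov, Set.inter_self, (hTj i).measure_preimage (hA i).nullMeasurableSet]
      simp only [eq_self_iff_true, if_true, lt_irrefl i, if_false, add_zero]
      have hpi : p i = (μ (A i)).toReal := rfl
      rw [← hpi]
      nlinarith [hpnn i]
    · rw [hcov, Set.inter_comm, hpre j i hij.le]
      have := hdecay j i hij
      rw [if_neg hij.ne', if_neg (by omega), if_pos hij]
      rw [hp] at *
      nlinarith [abs_le.1 this]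
  -- variance bound
  set E : ℕ → ℝ := fun n => ∑ j ∈ Finset.Icc 1 n, p j with hEdef
  have hEnn : ∀ n, 0 ≤ E n := fun n => Finset.sum_nonneg fun j _ => hpnn j
  set K : ℝ := 1 + 2 * (C * (θ / (1 - θ))) with hK
  have hvar : ∀ n, ∫ x, (∑ j ∈ Finset.Icc 1 n, (F j x - p j)) ^ 2 ∂μ ≤ K * E n := by
    intro n
    set s := Finset.Icc 1 n with hs
    have hsq : ∀ x : X, (∑ j ∈ s, (F j x - p j)) ^ 2 =
        ∑ i ∈ s, ∑ j ∈ s, (F i x - p i) * (F j x - p j) := by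
      intro x; rw [sq, Finset.sum_mul_sum]
    calc ∫ x, (∑ j ∈ s, (F j x - p j)) ^ 2 ∂μ
        = ∫ x, ∑ i ∈ s, ∑ j ∈ s, (F i x - p i) * (F j x - p j) ∂μ := by
          congr 1; funext x; exact hsq x
      _ = ∑ i ∈ s, ∑ j ∈ s, ∫ x, (F i x - p i) * (F j x - p j) ∂μ := by
          rw [integral_finset_sum s (fun i _ => integrable_finset_sum s (fun j _ => hcint i j))]
          exact Finset.sum_congr rfl fun i _ => integral_finset_sum s (fun j _ => hcint i j)
      _ ≤ ∑ i ∈ s, ∑ j ∈ s, ((if i = j then p i else 0) +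
            (if i < j then C * θ ^ (j - i) * p i else 0) +
            (if j < i then C * θ ^ (i - j) * p j else 0)) := by
          exact Finset.sum_le_sum fun i _ => Finset.sum_le_sum fun j _ => hcovbound i j
      _ ≤ K * E n := by
          have hgnn : 0 ≤ θ / (1 - θ) := div_nonneg hθ0.le (by linarith)
          have hB2 : ∀ a : ℕ, ∑ b ∈ s, (if a < b then C * θ ^ (b - a) * p a else 0) ≤
              C * (θ / (1 - θ)) * p a := by
            intro a
            rw [← Finset.sum_filter]
            have e2 : ∑ b ∈ s.filter (fun b => a < b), C * θ ^ (b - a) * p a =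
                (C * p a) * ∑ b ∈ s.filter (fun b => a < b), θ ^ (b - a) := by
              rw [Finset.mul_sum]
              exact Finset.sum_congr rfl fun b _ => by ring
            rw [e2, hs]
            calc (C * p a) * ∑ b ∈ (Finset.Icc 1 n).filter (fun b => a < b), θ ^ (b - a)
                ≤ (C * p a) * (θ / (1 - θ)) := by
                  apply mul_le_mul_of_nonneg_left (sbc_geom hθ0 hθ1 a n)
                  exact mul_nonneg hC.le (hpnn a)
              _ = C * (θ / (1 - θ)) * p a := by ring
          have hEs : E n = ∑ j ∈ s, p j := by rw [hEdef]
          have hB1 : ∑ i ∈ s, ∑ j ∈ s, (if i = j then p i else 0) = E n := by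
            rw [hEs]
            refine Finset.sum_congr rfl fun i hi => ?_
            rw [Finset.sum_ite_eq s i (fun _ => p i), if_pos hi]
          calc ∑ i ∈ s, ∑ j ∈ s, ((if i = j then p i else 0) +
                  (if i < j then C * θ ^ (j - i) * p i else 0) +
                  (if j < i then C * θ ^ (i - j) * p j else 0))
              = (∑ i ∈ s, ∑ j ∈ s, (if i = j then p i else 0)) +
                (∑ i ∈ s, ∑ j ∈ s, (if i < j then C * θ ^ (j - i) * p i else 0)) +
                (∑ i ∈ s, ∑ j ∈ s, (if j < i then C * θ ^ (i - j) * p j else 0)) := by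
                rw [← Finset.sum_add_distrib, ← Finset.sum_add_distrib]
                refine Finset.sum_congr rfl fun i _ => ?_
                rw [← Finset.sum_add_distrib, ← Finset.sum_add_distrib]
            _ ≤ E n + (C * (θ / (1 - θ))) * E n + (C * (θ / (1 - θ))) * E n := by
                refine add_le_add (add_le_add hB1.le ?_) ?_
                · calc ∑ i ∈ s, ∑ j ∈ s, (if i < j then C * θ ^ (j - i) * p i else 0)
                      ≤ ∑ i ∈ s, C * (θ / (1 - θ)) * p i :=
                        Finset.sum_le_sum fun i _ => hB2 i
                    _ = (C * (θ / (1 - θ))) * E n := by rw [hEs, Finset.mul_sum]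
                · rw [Finset.sum_comm]
                  calc ∑ j ∈ s, ∑ i ∈ s, (if j < i then C * θ ^ (i - j) * p j else 0)
                      ≤ ∑ j ∈ s, C * (θ / (1 - θ)) * p j :=
                        Finset.sum_le_sum fun j _ => hB2 j
                    _ = (C * (θ / (1 - θ))) * E n := by rw [hEs, Finset.mul_sum]
            _ = K * E n := by rw [hK]; ring
  have hEtop : Tendsto E atTop atTop := hE
  have hEmono : Monotone E := by
    intro a b hab
    rw [hEdef]
    exact Finset.sum_le_sum_of_subset_of_nonneg
      (Finset.Icc_subset_Icc le_rfl hab) (fun j _ _ => hpnn j)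
  have hE0 : E 0 = 0 := by rw [hEdef]; simp
  have hEsucc : ∀ n, E (n + 1) ≤ E n + 1 := by
    intro n
    rw [hEdef]
    simp only
    rw [Finset.sum_Icc_succ_top (Nat.le_add_left 1 n)]
    exact add_le_add le_rfl (hple (n + 1))
  have hex : ∀ k : ℕ, ∃ n, ((k : ℝ)) ^ 2 ≤ E n :=
    fun k => (tendsto_atTop.1 hEtop ((k : ℝ) ^ 2)).exists
  set m : ℕ → ℕ := fun k => Nat.find (hex k) with hm
  have hm1 : ∀ k : ℕ, ((k : ℝ)) ^ 2 ≤ E (m k) := fun k => Nat.find_spec (hex k)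
  have hm2 : ∀ k : ℕ, ∀ n < m k, ¬ ((k : ℝ) ^ 2 ≤ E n) := fun k n hn => Nat.find_min (hex k) hn
  set φ : ℕ → ℕ := fun k => Nat.rec 0 (fun k ih => max (ih + 1) (m (k + 1))) k with hφdef
  have hφ0 : φ 0 = 0 := rfl
  have hφs : ∀ k, φ (k + 1) = max (φ k + 1) (m (k + 1)) := fun k => rfl
  have hφmono : StrictMono φ := strictMono_nat_of_lt_succ fun k => by rw [hφs]; omega
  have hφlow : ∀ k : ℕ, ((k : ℝ)) ^ 2 ≤ E (φ k) := by
    intro k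
    cases k with
    | zero => simp [hφ0, hE0]
    | succ k => exact le_trans (hm1 (k + 1)) (hEmono (by rw [hφs]; omega))
  have hφhigh : ∀ k : ℕ, E (φ k) ≤ ((k : ℝ)) ^ 2 + 1 := by
    intro k
    induction k with
    | zero => simp [hφ0, hE0]
    | succ k ih =>
      rw [hφs]
      rcases le_total (m (k + 1)) (φ k + 1) with h | h
      · rw [max_eq_left h]
        calc E (φ k + 1) ≤ E (φ k) + 1 := hEsucc _
          _ ≤ (k : ℝ) ^ 2 + 1 + 1 := by linarith
          _ ≤ ((k + 1 : ℕ) : ℝ) ^ 2 + 1 := by push_cast; nlinarith [Nat.cast_nonneg (α := ℝ) k]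
      · rw [max_eq_right h]
        rcases Nat.eq_zero_or_pos (m (k + 1)) with h0 | h0
        · rw [h0, hE0]; positivity
        · obtain ⟨t, ht⟩ : ∃ t, m (k + 1) = t + 1 := ⟨m (k + 1) - 1, by omega⟩
          have h3 := hm2 (k + 1) t (by omega)
          push_neg at h3
          rw [ht]
          calc E (t + 1) ≤ E t + 1 := hEsucc t
            _ ≤ ((k + 1 : ℕ) : ℝ) ^ 2 + 1 := by push_cast at h3 ⊢; linarith
  have hφpos : ∀ k : ℕ, 1 ≤ k → (1 : ℝ) ≤ E (φ k) := by
    intro k hk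
    refine le_trans ?_ (hφlow k)
    have : (1 : ℝ) ≤ (k : ℝ) := by exact_mod_cast hk
    nlinarith
  have hupper : Tendsto (fun k : ℕ => (((k : ℝ) + 1) ^ 2 + 1) / (k : ℝ) ^ 2) atTop (𝓝 1) := by
    have h1 : (fun k : ℕ => (((k : ℝ) + 1) ^ 2 + 1) / (k : ℝ) ^ 2) =ᶠ[atTop]
        fun k => 1 + 2 / (k : ℝ) + 2 / (k : ℝ) ^ 2 := by
      filter_upwards [eventually_gt_atTop 0] with k hk
      have hk0 : (k : ℝ) ≠ 0 := Nat.cast_ne_zero.2 hk.ne'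
      field_simp
      ring
    rw [tendsto_congr' h1]
    have h2 : Tendsto (fun k : ℕ => 2 / (k : ℝ)) atTop (𝓝 0) :=
      tendsto_const_div_atTop_nhds_zero_nat 2
    have h3 : Tendsto (fun k : ℕ => 2 / (k : ℝ) ^ 2) atTop (𝓝 0) :=
      tendsto_const_nhds.div_atTop
        ((tendsto_pow_atTop two_ne_zero).comp tendsto_natCast_atTop_atTop)
    have h4 : Tendsto (fun k : ℕ => 1 + 2 / (k : ℝ) + 2 / (k : ℝ) ^ 2) atTop
        (𝓝 (1 + 0 + 0)) := ((tendsto_const_nhds (x := (1:ℝ))).add h2).add h3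
    simpa using h4
  have hratio : Tendsto (fun k : ℕ => E (φ (k + 1)) / E (φ k)) atTop (𝓝 1) := by
    refine tendsto_of_tendsto_of_tendsto_of_le_of_le' tendsto_const_nhds hupper ?_ ?_
    · filter_upwards [eventually_ge_atTop 1] with k hk
      have h4 : (0 : ℝ) < E (φ k) := lt_of_lt_of_le one_pos (hφpos k hk)
      rw [le_div_iff₀ h4, one_mul]
      exact hEmono (hφmono.monotone (Nat.le_succ k))
    · filter_upwards [eventually_ge_atTop 1] with k hk
      have hk1 : (1 : ℝ) ≤ (k : ℝ) := by exact_mod_cast hk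
      have hd : (0 : ℝ) < (k : ℝ) ^ 2 := by nlinarith
      refine div_le_div₀ (by positivity) ?_ hd (hφlow k)
      have := hφhigh (k + 1)
      push_cast at this ⊢
      linarith
  have hgnn : (0 : ℝ) ≤ θ / (1 - θ) := div_nonneg hθ0.le (by linarith)
  have hKpos : (0 : ℝ) < K := by
    rw [hK]
    have := mul_nonneg hC.le hgnn
    linarith
  -- integrability and measurability of the squared centered sums
  have hVint : ∀ nn : ℕ, Integrable (fun x => (∑ j ∈ Finset.Icc 1 nn, (F j x - p j)) ^ 2) μ := by
    intro nn
    have e : (fun x => (∑ j ∈ Finset.Icc 1 nn, (F j x - p j)) ^ 2) =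
        fun x => ∑ i ∈ Finset.Icc 1 nn, ∑ j ∈ Finset.Icc 1 nn,
          (F i x - p i) * (F j x - p j) := by
      funext x; rw [sq, Finset.sum_mul_sum]
    rw [e]
    exact integrable_finset_sum _ fun i _ => integrable_finset_sum _ fun j _ => hcint i j
  have hVmeas : ∀ nn : ℕ, Measurable (fun x => (∑ j ∈ Finset.Icc 1 nn, (F j x - p j)) ^ 2) :=
    fun nn => (Finset.measurable_sum _ fun j _ => (hmeasF j).sub measurable_const).pow_const 2
  -- the normalized squares along the subsequence
  set Q : ℕ → X → ℝ := fun k x =>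
    (∑ j ∈ Finset.Icc 1 (φ (k + 1)), (F j x - p j)) ^ 2 / (E (φ (k + 1))) ^ 2 with hQdef
  have hQnn : ∀ k x, 0 ≤ Q k x := fun k x => div_nonneg (sq_nonneg _) (sq_nonneg _)
  have hQmeas : ∀ k, Measurable (Q k) := fun k => (hVmeas _).div_const _
  have hQint : ∀ k, Integrable (Q k) μ := fun k => (hVint _).div_const _
  have hQbound : ∀ k : ℕ, ∫ x, Q k x ∂μ ≤ K / ((k : ℝ) + 1) ^ 2 := by
    intro k
    have hc1 : (1 : ℝ) ≤ E (φ (k + 1)) := hφpos (k + 1) (by omega)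
    have hc0 : (0 : ℝ) < E (φ (k + 1)) := lt_of_lt_of_le one_pos hc1
    have hck : ((k : ℝ) + 1) ^ 2 ≤ E (φ (k + 1)) := by
      have := hφlow (k + 1); push_cast at this ⊢; linarith
    have hkpos : (0 : ℝ) < ((k : ℝ) + 1) ^ 2 := by positivity
    rw [hQdef]
    simp only
    rw [integral_div]
    calc (∫ x, (∑ j ∈ Finset.Icc 1 (φ (k + 1)), (F j x - p j)) ^ 2 ∂μ) / (E (φ (k + 1))) ^ 2
        ≤ (K * E (φ (k + 1))) / (E (φ (k + 1))) ^ 2 := by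
          apply div_le_div_of_nonneg_right ?_ (by positivity)
          exact hvar _
      _ = K / E (φ (k + 1)) := by field_simp
      _ ≤ K / ((k : ℝ) + 1) ^ 2 := by
          apply div_le_div_of_nonneg_left hKpos.le hkpos hck
  have hsumm : Summable (fun k : ℕ => K / ((k : ℝ) + 1) ^ 2) := by
    have h1 : Summable (fun n : ℕ => 1 / (n : ℝ) ^ 2) := Real.summable_one_div_nat_pow.2 one_lt_two
    have h2 : Summable (fun n : ℕ => 1 / ((n : ℝ) + 1) ^ 2) := by
      have := (summable_nat_add_iff 1).2 h1
      refine this.congr fun n => ?_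
      push_cast
      ring_nf
    have h3 := h2.mul_left K
    refine h3.congr fun n => ?_
    rw [mul_one_div]
  -- a.e. convergence along the subsequence
  have key : ∀ᵐ x ∂μ, ∑' k, ENNReal.ofReal (Q k x) < ⊤ := by
    have h1 : ∫⁻ x, ∑' k, ENNReal.ofReal (Q k x) ∂μ = ∑' k, ∫⁻ x, ENNReal.ofReal (Q k x) ∂μ :=
      lintegral_tsum fun k => ((hQmeas k).ennreal_ofReal).aemeasurable
    have h2 : ∀ k, ∫⁻ x, ENNReal.ofReal (Q k x) ∂μ = ENNReal.ofReal (∫ x, Q k x ∂μ) :=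
      fun k => (ofReal_integral_eq_lintegral_ofReal (hQint k) (ae_of_all _ (hQnn k))).symm
    have h3 : ∑' k, ∫⁻ x, ENNReal.ofReal (Q k x) ∂μ ≤
        ∑' k : ℕ, ENNReal.ofReal (K / ((k : ℝ) + 1) ^ 2) := by
      refine ENNReal.tsum_le_tsum fun k => ?_
      rw [h2 k]
      exact ENNReal.ofReal_le_ofReal (hQbound k)
    have h4 : ∑' k : ℕ, ENNReal.ofReal (K / ((k : ℝ) + 1) ^ 2) < ⊤ := by
      rw [← ENNReal.ofReal_tsum_of_nonneg (fun k => by positivity) hsumm]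
      exact ENNReal.ofReal_lt_top
    have h5 : ∫⁻ x, ∑' k, ENNReal.ofReal (Q k x) ∂μ ≠ ⊤ := by
      rw [h1]; exact (lt_of_le_of_lt h3 h4).ne
    exact ae_lt_top (Measurable.ennreal_tsum fun k => (hQmeas k).ennreal_ofReal) h5
  -- counting identity
  have hcard : ∀ (x : X) (n : ℕ),
      (((Finset.Icc 1 n).filter (fun j => T^[j] x ∈ A j)).card : ℝ) =
        ∑ j ∈ Finset.Icc 1 n, F j x := by
    intro x n
    rw [Finset.card_filter]
    push_cast
    refine Finset.sum_congr rfl fun j _ => ?_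
    by_cases h : T^[j] x ∈ A j <;> simp [hF, Set.indicator_apply, Set.mem_preimage, h]
  have hSmono : ∀ x, Monotone fun n => ∑ j ∈ Finset.Icc 1 n, F j x := fun x a b hab =>
    Finset.sum_le_sum_of_subset_of_nonneg (Finset.Icc_subset_Icc le_rfl hab)
      fun j _ _ => hFnn j x
  have hSnn : ∀ x n, 0 ≤ ∑ j ∈ Finset.Icc 1 n, F j x := fun x n =>
    Finset.sum_nonneg fun j _ => hFnn j x
  -- main argument
  filter_upwards [key] with x hx
  have hsum : Summable fun k => Q k x := by
    have h6 := ENNReal.summable_toReal hx.ne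
    refine h6.congr fun k => ?_
    rw [ENNReal.toReal_ofReal (hQnn k x)]
  have h0 : Tendsto (fun k => Q k x) atTop (𝓝 0) := hsum.tendsto_atTop_zero
  have heq : ∀ k : ℕ, Q k x =
      ((∑ j ∈ Finset.Icc 1 (φ (k + 1)), F j x) / E (φ (k + 1)) - 1) ^ 2 := by
    intro k
    have hc0 : (0 : ℝ) < E (φ (k + 1)) := lt_of_lt_of_le one_pos (hφpos (k + 1) (by omega))
    have e1 : (∑ j ∈ Finset.Icc 1 (φ (k + 1)), F j x) / E (φ (k + 1)) - 1 =
        (∑ j ∈ Finset.Icc 1 (φ (k + 1)), (F j x - p j)) / E (φ (k + 1)) := by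
      rw [Finset.sum_sub_distrib]
      have hEphi : E (φ (k + 1)) = ∑ j ∈ Finset.Icc 1 (φ (k + 1)), p j := by rw [hEdef]
      rw [hEphi]
      rw [sub_div, div_self (hEphi ▸ hc0).ne']
    rw [hQdef]
    simp only
    rw [e1, div_pow]
  have h6 : Tendsto
      (fun k => ((∑ j ∈ Finset.Icc 1 (φ (k + 1)), F j x) / E (φ (k + 1)) - 1) ^ 2)
      atTop (𝓝 0) := by
    refine h0.congr fun k => ?_
    rw [heq k]
  have h7 : Tendsto
      (fun k => |(∑ j ∈ Finset.Icc 1 (φ (k + 1)), F j x) / E (φ (k + 1)) - 1|)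
      atTop (𝓝 0) := by
    have h8 := (Real.continuous_sqrt.tendsto 0).comp h6
    simp only [Function.comp_def, Real.sqrt_sq_eq_abs, Real.sqrt_zero] at h8
    exact h8
  have h9 : Tendsto
      (fun k => (∑ j ∈ Finset.Icc 1 (φ (k + 1)), F j x) / E (φ (k + 1)) - 1)
      atTop (𝓝 0) := by
    have h7n : Tendsto
        (fun k => -|(∑ j ∈ Finset.Icc 1 (φ (k + 1)), F j x) / E (φ (k + 1)) - 1|)
        atTop (𝓝 0) := by simpa using h7.neg
    exact tendsto_of_tendsto_of_tendsto_of_le_of_le h7n h7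
      (fun k => neg_abs_le _) (fun k => le_abs_self _)
  have h10 : Tendsto
      (fun k => (∑ j ∈ Finset.Icc 1 (φ (k + 1)), F j x) / E (φ (k + 1)))
      atTop (𝓝 1) := by
    have := tendsto_sub_nhds_zero_iff.1 h9
    exact this
  have h11 : Tendsto (fun k => (∑ j ∈ Finset.Icc 1 (φ k), F j x) / E (φ k)) atTop (𝓝 1) :=
    (tendsto_add_atTop_iff_nat 1).1 h10
  -- sandwich
  have hall : Tendsto (fun n => (∑ j ∈ Finset.Icc 1 n, F j x) / E n) atTop (𝓝 1) :=
    sbc_sandwich (hSnn x) (hSmono x) hEmono hEtop hφmono hratio h11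
  have hmain : Tendsto (fun n : ℕ =>
      (((Finset.Icc 1 n).filter (fun j => T^[j] x ∈ A j)).card : ℝ) /
        (∑ j ∈ Finset.Icc 1 n, p j)) atTop (𝓝 1) := by
    refine hall.congr fun n => ?_
    rw [← hcard x n, hEdef]
  refine ⟨hmain, ?_⟩
  -- infinitude
  have hStop : Tendsto (fun n => ∑ j ∈ Finset.Icc 1 n, F j x) atTop atTop := by
    have h12 : Tendsto (fun n => (∑ j ∈ Finset.Icc 1 n, F j x) / E n * E n) atTop atTop :=
      Tendsto.pos_mul_atTop one_pos hall hEtop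
    refine Tendsto.congr' ?_ h12
    have hpos := tendsto_atTop.1 hEtop 1
    filter_upwards [hpos] with n hn
    have : E n ≠ 0 := by linarith
    rw [div_mul_cancel₀ _ this]
  by_contra hfin
  rw [Set.not_infinite] at hfin
  obtain ⟨n, hn⟩ := (tendsto_atTop.1 hStop ((hfin.toFinset.card : ℝ) + 1)).exists
  have hsub : (Finset.Icc 1 n).filter (fun j => T^[j] x ∈ A j) ⊆ hfin.toFinset := by
    intro j hj
    rw [Set.Finite.mem_toFinset]
    exact (Finset.mem_filter.1 hj).2
  have hle := Finset.card_le_card hsub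
  have hcn := hcard x n
  have : ((((Finset.Icc 1 n).filter (fun j => T^[j] x ∈ A j)).card : ℝ)) ≤
      (hfin.toFinset.card : ℝ) := by exact_mod_cast hle
  rw [hcn] at this
  linarith
end

section
/- Regularity of flow-induced observables over balls: let B ⊆ ℝ^d be a compact set, r : B → [1, R] measurable, and for a fixed ball U = B_δ(z,u) ⊆ {(x,t) : x ∈ B, 0 ≤ t ≤ r(x)} in the Euclidean metric on ℝ^{d+1}, define ψ : B → ℝ by ψ(x) = Leb{s ∈ [0, r(x)] : (x,s) ∈ U} = length of the vertical slice of U over x. Then ψ belongs to the quasi-Hölder space V_{1/2}(B): there is K (depending on δ, d, but bounds can be made uniform over δ ≤ δ₀) such that sup_{0<ε≤ε₀} ε^{−1/2} ∫_B osc(ψ, B_ε(x)) dx ≤ K. -/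
open MeasureTheory Filter Metric
open scoped ENNReal Topology

/-- `√p - √q ≤ √(p - q)` for `0 ≤ q ≤ p`. -/
lemma sqrt_sub_sqrt_le_sqrt_sub {p q : ℝ} (hq : 0 ≤ q) (hpq : q ≤ p) :
    Real.sqrt p - Real.sqrt q ≤ Real.sqrt (p - q) := by
  have h2 : p ≤ (Real.sqrt q + Real.sqrt (p - q)) ^ 2 := by
    have e1 := Real.sq_sqrt hq
    have e2 := Real.sq_sqrt (sub_nonneg.2 hpq)
    nlinarith [mul_nonneg (Real.sqrt_nonneg q) (Real.sqrt_nonneg (p - q))]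
  have h1 : Real.sqrt p ≤ Real.sqrt q + Real.sqrt (p - q) := by
    calc Real.sqrt p ≤ Real.sqrt ((Real.sqrt q + Real.sqrt (p - q)) ^ 2) :=
          Real.sqrt_le_sqrt h2
      _ = Real.sqrt q + Real.sqrt (p - q) := Real.sqrt_sq (by positivity)
  linarith

/-- The square root is 1/2-Hölder. -/
lemma abs_sqrt_sub_sqrt_le {p q : ℝ} (hp : 0 ≤ p) (hq : 0 ≤ q) :
    |Real.sqrt p - Real.sqrt q| ≤ Real.sqrt |p - q| := by
  rcases le_total q p with h | h
  · rw [abs_of_nonneg (sub_nonneg.2 (Real.sqrt_le_sqrt h)), abs_of_nonneg (sub_nonneg.2 h)]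
    exact sqrt_sub_sqrt_le_sqrt_sub hq h
  · rw [abs_of_nonpos (sub_nonpos.2 (Real.sqrt_le_sqrt h)), abs_of_nonpos (sub_nonpos.2 h),
      neg_sub, neg_sub]
    exact sqrt_sub_sqrt_le_sqrt_sub hp h

/-- Bound on the essential oscillation of an a.e.-bounded function. -/
lemma osc_bound {α : Type*} [MeasurableSpace α] (ν : Measure α) (f : α → ℝ) (m M : ℝ)
    (hmM : m ≤ M) (hm : ∀ᵐ y ∂ν, m ≤ f y) (hM : ∀ᵐ y ∂ν, f y ≤ M) :
    0 ≤ essSup f ν - essInf f ν ∧ essSup f ν - essInf f ν ≤ M - m := by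
  rcases eq_or_ne ν 0 with rfl | hν
  · have hS : essSup f (0 : Measure α) = sInf Set.univ := by
      simp [essSup, Filter.limsup, Filter.limsSup, Set.eq_univ_iff_forall]
    have hI : essInf f (0 : Measure α) = sSup Set.univ := by
      simp [essInf, Filter.liminf, Filter.limsInf, Set.eq_univ_iff_forall]
    have h1 : sInf (Set.univ : Set ℝ) = 0 :=
      Real.sInf_of_not_bddBelow (by simpa using not_bddBelow_univ (α := ℝ))
    have h2 : sSup (Set.univ : Set ℝ) = 0 := Real.sSup_univ
    constructor <;> simp [hS, hI, h1, h2] <;> linarith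
  · have : (ae ν).NeBot := ae_neBot.2 hν
    have hble : IsBoundedUnder (· ≤ ·) (ae ν) f := ⟨M, hM⟩
    have hbge : IsBoundedUnder (· ≥ ·) (ae ν) f := ⟨m, hm⟩
    have h1 : essSup f ν ≤ M := limsup_le_of_le hbge.isCoboundedUnder_flip hM
    have h2 : m ≤ essInf f ν := le_liminf_of_le hble.isCoboundedUnder_flip hm
    have h3 : essInf f ν ≤ essSup f ν := liminf_le_limsup hble hbge
    constructor <;> linarith

/-- The vertical-slice-length observable induced on the base by a Euclidean ball in the
flow space belongs to the quasi-Hölder space `V_{1/2}`. -/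
theorem stmt19 (d : ℕ) (Bset : Set (EuclideanSpace ℝ (Fin d))) (hBcpt : IsCompact Bset)
    (R : ℝ) (hR : 1 ≤ R) (r : EuclideanSpace ℝ (Fin d) → ℝ)
    (hr : ∀ x, 1 ≤ r x ∧ r x ≤ R) (hrmeas : Measurable r)
    (δ : ℝ) (hδ : 0 < δ) (z : EuclideanSpace ℝ (Fin d)) (u : ℝ)
    (hU : ∀ x ∈ Bset, ∀ s : ℝ, dist x z ^ 2 + (s - u) ^ 2 < δ ^ 2 → 0 ≤ s ∧ s ≤ r x)
    (ψ : EuclideanSpace ℝ (Fin d) → ℝ)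
    (hψ : ∀ x, ψ x =
      (volume {s : ℝ | 0 ≤ s ∧ s ≤ r x ∧ dist x z ^ 2 + (s - u) ^ 2 < δ ^ 2}).toReal)
    (ε₀ : ℝ) (hε₀ : 0 < ε₀) :
    ∃ K : ℝ, ∀ ε : ℝ, 0 < ε → ε ≤ ε₀ →
      ε ^ (-(1/2 : ℝ)) *
        ∫ x in Bset,
          (essSup ψ (volume.restrict (ball x ε ∩ Bset)) -
            essInf ψ (volume.restrict (ball x ε ∩ Bset))) ≤ K := by
  -- a bound on the distance of points of `Bset` to `z`
  obtain ⟨D₀, hD₀⟩ := hBcpt.isBounded.subset_closedBall z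
  set D : ℝ := max D₀ 0 with hD
  have hDnonneg : 0 ≤ D := le_max_right _ _
  have hdistD : ∀ x ∈ Bset, dist x z ≤ D := fun x hx =>
    le_trans (mem_closedBall.1 (hD₀ hx)) (le_max_left _ _)
  -- explicit formula for ψ on Bset
  have hψ' : ∀ x ∈ Bset, ψ x = 2 * Real.sqrt (max (δ ^ 2 - dist x z ^ 2) 0) := by
    intro x hx
    rcases le_or_gt (δ ^ 2 - dist x z ^ 2) 0 with h | h
    · have : {s : ℝ | 0 ≤ s ∧ s ≤ r x ∧ dist x z ^ 2 + (s - u) ^ 2 < δ ^ 2} = ∅ := by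
        ext s
        simp only [Set.mem_setOf_eq, Set.mem_empty_iff_false, iff_false, not_and]
        intro _ _ hlt
        nlinarith [sq_nonneg (s - u)]
      rw [hψ x, this, max_eq_right h]
      simp
    · set a : ℝ := δ ^ 2 - dist x z ^ 2 with ha
      have hsq : Real.sqrt a ^ 2 = a := Real.sq_sqrt h.le
      have hset : {s : ℝ | 0 ≤ s ∧ s ≤ r x ∧ dist x z ^ 2 + (s - u) ^ 2 < δ ^ 2}
          = Set.Ioo (u - Real.sqrt a) (u + Real.sqrt a) := by
        ext s
        simp only [Set.mem_setOf_eq, Set.mem_Ioo]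
        constructor
        · rintro ⟨-, -, hlt⟩
          have h2 : (s - u) ^ 2 < Real.sqrt a ^ 2 := by rw [hsq]; linarith
          have h3 : |s - u| < Real.sqrt a := by
            rw [Real.lt_sqrt (abs_nonneg _), sq_abs]
            linarith
          constructor <;> [linarith [neg_lt_of_abs_lt h3]; linarith [lt_of_abs_lt h3]]
        · rintro ⟨h1, h2⟩
          have h3 : |s - u| < Real.sqrt a := abs_lt.2 ⟨by linarith, by linarith⟩
          have h4 : (s - u) ^ 2 < a := by
            have := mul_self_lt_mul_self (abs_nonneg _) h3
            rw [← sq_abs (s - u)]; nlinarith [Real.sqrt_nonneg a]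
          have hlt : dist x z ^ 2 + (s - u) ^ 2 < δ ^ 2 := by rw [ha] at h4; linarith
          exact ⟨(hU x hx s hlt).1, (hU x hx s hlt).2, hlt⟩
      rw [hψ x, hset, Real.volume_Ioo, max_eq_left h.le]
      rw [ENNReal.toReal_ofReal (by nlinarith [Real.sqrt_nonneg a])]
      ring
  -- Hölder estimate
  have hHolder : ∀ ε > 0, ∀ x ∈ Bset, ∀ y ∈ Bset, dist y x ≤ ε →
      |ψ y - ψ x| ≤ 2 * (Real.sqrt (2 * D) * Real.sqrt ε) := by
    intro ε hε x hx y hy hdist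
    rw [hψ' x hx, hψ' y hy]
    have h1 : |2 * Real.sqrt (max (δ ^ 2 - dist y z ^ 2) 0)
        - 2 * Real.sqrt (max (δ ^ 2 - dist x z ^ 2) 0)|
        = 2 * |Real.sqrt (max (δ ^ 2 - dist y z ^ 2) 0)
            - Real.sqrt (max (δ ^ 2 - dist x z ^ 2) 0)| := by
      rw [← mul_sub, abs_mul]; norm_num
    rw [h1]
    have h2 : |Real.sqrt (max (δ ^ 2 - dist y z ^ 2) 0)
        - Real.sqrt (max (δ ^ 2 - dist x z ^ 2) 0)|
        ≤ Real.sqrt |max (δ ^ 2 - dist y z ^ 2) 0 - max (δ ^ 2 - dist x z ^ 2) 0| :=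
      abs_sqrt_sub_sqrt_le (le_max_right _ _) (le_max_right _ _)
    have h3 : |max (δ ^ 2 - dist y z ^ 2) 0 - max (δ ^ 2 - dist x z ^ 2) 0|
        ≤ 2 * D * ε := by
      calc |max (δ ^ 2 - dist y z ^ 2) 0 - max (δ ^ 2 - dist x z ^ 2) 0|
          ≤ |(δ ^ 2 - dist y z ^ 2) - (δ ^ 2 - dist x z ^ 2)| :=
            abs_max_sub_max_le_abs _ _ _
        _ = |dist x z - dist y z| * |dist x z + dist y z| := by
            rw [← abs_mul]; ring_nf
        _ ≤ ε * (2 * D) := by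
            apply mul_le_mul
            · exact le_trans (abs_dist_sub_le x y z) (by rwa [dist_comm])
            · rw [abs_of_nonneg (by positivity)]
              linarith [hdistD x hx, hdistD y hy]
            · exact abs_nonneg _
            · linarith
        _ = 2 * D * ε := by ring
    have h4 : Real.sqrt |max (δ ^ 2 - dist y z ^ 2) 0 - max (δ ^ 2 - dist x z ^ 2) 0|
        ≤ Real.sqrt (2 * D) * Real.sqrt ε := by
      rw [← Real.sqrt_mul (by positivity)]
      exact Real.sqrt_le_sqrt h3
    linarith
  -- the constant
  refine ⟨(volume Bset).toReal * (4 * Real.sqrt (2 * D)), ?_⟩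
  intro ε hε hεε₀
  set c : ℝ := 2 * (Real.sqrt (2 * D) * Real.sqrt ε) with hc
  have hcnonneg : 0 ≤ c := by positivity
  have hBmeas : MeasurableSet Bset := hBcpt.isClosed.measurableSet
  -- pointwise oscillation bound
  have hosc : ∀ x ∈ Bset,
      0 ≤ essSup ψ (volume.restrict (ball x ε ∩ Bset))
          - essInf ψ (volume.restrict (ball x ε ∩ Bset)) ∧
      essSup ψ (volume.restrict (ball x ε ∩ Bset))
          - essInf ψ (volume.restrict (ball x ε ∩ Bset)) ≤ 2 * c := by
    intro x hx
    have hset : MeasurableSet (ball x ε ∩ Bset) := measurableSet_ball.inter hBmeas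
    have hae : ∀ᵐ y ∂volume.restrict (ball x ε ∩ Bset), y ∈ ball x ε ∩ Bset :=
      ae_restrict_mem hset
    have hm : ∀ᵐ y ∂volume.restrict (ball x ε ∩ Bset), ψ x - c ≤ ψ y := by
      filter_upwards [hae] with y hy
      have := hHolder ε hε x hx y hy.2 (le_of_lt (mem_ball.1 hy.1))
      have := abs_le.1 this
      linarith [this.1]
    have hM : ∀ᵐ y ∂volume.restrict (ball x ε ∩ Bset), ψ y ≤ ψ x + c := by
      filter_upwards [hae] with y hy
      have := hHolder ε hε x hx y hy.2 (le_of_lt (mem_ball.1 hy.1))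
      have := abs_le.1 this
      linarith [this.2]
    have := osc_bound (volume.restrict (ball x ε ∩ Bset)) ψ (ψ x - c) (ψ x + c)
      (by linarith) hm hM
    exact ⟨this.1, by linarith [this.2]⟩
  -- integrate
  have hμB : volume Bset < ⊤ := hBcpt.measure_lt_top
  have hint : ∫ x in Bset,
      (essSup ψ (volume.restrict (ball x ε ∩ Bset)) -
        essInf ψ (volume.restrict (ball x ε ∩ Bset)))
      ≤ ∫ _ in Bset, 2 * c := by
    apply integral_mono_of_nonneg
    · exact (ae_restrict_iff' hBmeas).2 (ae_of_all _ fun x hx => (hosc x hx).1)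
    · exact integrableOn_const hμB.ne
    · exact (ae_restrict_iff' hBmeas).2 (ae_of_all _ fun x hx => (hosc x hx).2)
  rw [setIntegral_const] at hint
  have hεpow : (0 : ℝ) < ε ^ (-(1/2 : ℝ)) := Real.rpow_pos_of_pos hε _
  have hone : ε ^ (-(1/2 : ℝ)) * Real.sqrt ε = 1 := by
    rw [Real.sqrt_eq_rpow, ← Real.rpow_add hε]; norm_num
  have hkey : ε ^ (-(1/2 : ℝ)) * ((volume Bset).toReal • (2 * c))
      = (volume Bset).toReal * (4 * Real.sqrt (2 * D)) := by
    rw [smul_eq_mul, hc,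
      show ε ^ (-(1/2 : ℝ)) * ((volume Bset).toReal
          * (2 * (2 * (Real.sqrt (2 * D) * Real.sqrt ε))))
        = (volume Bset).toReal * (4 * Real.sqrt (2 * D))
          * (ε ^ (-(1/2 : ℝ)) * Real.sqrt ε) from by ring, hone, mul_one]
  calc ε ^ (-(1/2 : ℝ)) * ∫ x in Bset,
          (essSup ψ (volume.restrict (ball x ε ∩ Bset)) -
            essInf ψ (volume.restrict (ball x ε ∩ Bset)))
      ≤ ε ^ (-(1/2 : ℝ)) * ((volume Bset).toReal • (2 * c)) :=
        mul_le_mul_of_nonneg_left hint hεpow.le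
    _ = (volume Bset).toReal * (4 * Real.sqrt (2 * D)) := hkey
end
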